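/- arXiv:2001.09426 — 3 statements merged into one kernel-verified Lean document; each statement's English description precedes it below -/
import Mathlib

section
/- For r₀ = 0.31 and ψ(s) = s/tan(s), the function r ↦ 2 − r/tan(r/2) is positive and monotonically increasing on (0, r₀], and its value at r₀ is less than 0.02. -/
open Real Set

lemma aux_half_lt_pi_div_two : (0.155 : ℝ) < π / 2 := by
  nlinarith [Real.pi_gt_d6]

lemma aux_tan_pos {t : ℝ} (h0 : 0 < t) (h1 : t ≤ 0.155) : 0 < Real.tan t :=
  Real.tan_pos_of_pos_of_lt_pi_div_two h0 (lt_of_le_of_lt h1 aux_half_lt_pi_div_two)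

lemma aux_cos_pos {t : ℝ} (h0 : 0 < t) (h1 : t ≤ 0.155) : 0 < Real.cos t :=
  Real.cos_pos_of_mem_Ioo ⟨by nlinarith [Real.pi_gt_d6],
    lt_of_le_of_lt h1 aux_half_lt_pi_div_two⟩

lemma aux_tan_upper : Real.tan 0.155 < 0.31 / 1.98 := by
  have h2 : (0.155 : ℝ) = 2 * 0.0775 := by norm_num
  have hu0 : (0 : ℝ) < 0.0775 := by norm_num
  have hcos : (0 : ℝ) < Real.cos 0.0775 := aux_cos_pos hu0 (by norm_num)
  have hcoslb : (1 : ℝ) - 0.0775 ^ 2 / 2 < Real.cos 0.0775 :=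
    Real.one_sub_sq_div_two_lt_cos (by norm_num)
  have hsin : Real.sin 0.0775 < 0.0775 := Real.sin_lt hu0
  have htlb : (0.0775 : ℝ) < Real.tan 0.0775 :=
    Real.lt_tan hu0 (lt_trans (by norm_num) aux_half_lt_pi_div_two)
  have htub : Real.tan 0.0775 < 0.0775 / (1 - 0.0775 ^ 2 / 2) := by
    rw [Real.tan_eq_sin_div_cos]
    calc Real.sin 0.0775 / Real.cos 0.0775 < 0.0775 / Real.cos 0.0775 := by
          gcongr
      _ < 0.0775 / (1 - 0.0775 ^ 2 / 2) := by
          apply div_lt_div_of_pos_left (by norm_num) (by norm_num) hcoslb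
  rw [h2, Real.tan_two_mul]
  set T := Real.tan 0.0775 with hT
  have hTub : T < 0.0778 := lt_trans htub (by norm_num)
  have hden : (0 : ℝ) < 1 - T ^ 2 := by nlinarith
  rw [div_lt_div_iff₀ hden (by norm_num)]
  nlinarith

set_option maxHeartbeats 1000000 in
theorem stmt_14 :
    let r₀ : ℝ := 0.31
    let f : ℝ → ℝ := fun r => 2 - r / Real.tan (r / 2)
    (∀ r ∈ Set.Ioc (0:ℝ) r₀, 0 < f r) ∧
    MonotoneOn f (Set.Ioc (0:ℝ) r₀) ∧
    f r₀ < 0.02 := by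
  intro r₀ f
  have hpos : ∀ r ∈ Set.Ioc (0:ℝ) r₀, 0 < f r := by
    intro r ⟨hr0, hr1⟩
    have ht0 : 0 < r / 2 := by linarith
    have ht1 : r / 2 ≤ 0.155 := by simp only [r₀] at hr1; linarith
    have htan : 0 < Real.tan (r / 2) := aux_tan_pos ht0 ht1
    have hlt : r / 2 < Real.tan (r / 2) :=
      Real.lt_tan ht0 (lt_of_le_of_lt ht1 aux_half_lt_pi_div_two)
    have : r / Real.tan (r / 2) < 2 := by
      rw [div_lt_iff₀ htan]; linarith
    simp only [f]; linarith
  refine ⟨hpos, ?_, ?_⟩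
  · have hconv : Convex ℝ (Set.Ioc (0:ℝ) r₀) := convex_Ioc _ _
    have hcont : ContinuousOn f (Set.Ioc (0:ℝ) r₀) := by
      apply ContinuousOn.sub continuousOn_const
      apply ContinuousOn.div continuousOn_id
      · intro x ⟨hx0, hx1⟩
        have hx1' : x ≤ 0.31 := hx1
        have hc : ContinuousAt Real.tan (x / 2) :=
          Real.continuousAt_tan.2
            (ne_of_gt (aux_cos_pos (by linarith) (by linarith)))
        have h2c : ContinuousAt (fun r : ℝ => r / 2) x := by fun_prop
        exact (ContinuousAt.comp (f := fun r : ℝ => r / 2) (g := Real.tan) hc h2c).continuousWithinAt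
      · intro x ⟨hx0, hx1⟩
        have hx1' : x ≤ 0.31 := hx1
        exact ne_of_gt (aux_tan_pos (by linarith) (by linarith))
    have hderiv : ∀ x ∈ interior (Set.Ioc (0:ℝ) r₀), 0 < deriv f x := by
      rw [interior_Ioc]
      intro x ⟨hx0, hx1⟩
      have ht0 : 0 < x / 2 := by linarith
      have ht1 : x / 2 ≤ 0.155 := by simp only [r₀] at hx1; linarith
      have hcos : 0 < Real.cos (x / 2) := aux_cos_pos ht0 ht1
      have htan : 0 < Real.tan (x / 2) := aux_tan_pos ht0 ht1
      have h1 : HasDerivAt (fun r : ℝ => Real.tan (r / 2))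
          (1 / Real.cos (x / 2) ^ 2 * (1 / 2)) x := by
        have := (Real.hasDerivAt_tan (ne_of_gt hcos)).comp x
          ((hasDerivAt_id x).div_const 2)
        simpa [Function.comp_def] using this
      have h2 : HasDerivAt (fun r : ℝ => r / Real.tan (r / 2))
          ((1 * Real.tan (x / 2) - x * (1 / Real.cos (x / 2) ^ 2 * (1 / 2))) /
            Real.tan (x / 2) ^ 2) x :=
        (hasDerivAt_id x).div h1 (ne_of_gt htan)
      have h3 : HasDerivAt f
          (0 - (1 * Real.tan (x / 2) - x * (1 / Real.cos (x / 2) ^ 2 * (1 / 2))) /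
            Real.tan (x / 2) ^ 2) x := (hasDerivAt_const x 2).sub h2
      rw [h3.deriv]
      have hsin : Real.sin (x / 2) < x / 2 := Real.sin_lt ht0
      have hsinpos : 0 < Real.sin (x / 2) := by
        rw [Real.tan_eq_sin_div_cos] at htan
        exact (div_pos_iff.1 htan).resolve_right (fun h => absurd hcos (not_lt.2 h.2.le)) |>.1
      have hcle : Real.cos (x / 2) ≤ 1 := Real.cos_le_one _
      have key : Real.tan (x / 2) < x * (1 / Real.cos (x / 2) ^ 2 * (1 / 2)) := by
        rw [Real.tan_eq_sin_div_cos, div_lt_iff₀ hcos]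
        have heq : x * (1 / Real.cos (x / 2) ^ 2 * (1 / 2)) * Real.cos (x / 2)
            = x / (2 * Real.cos (x / 2)) := by
          field_simp
        rw [heq, lt_div_iff₀ (by positivity)]
        nlinarith
      have ht2 : 0 < Real.tan (x / 2) ^ 2 := by positivity
      have : (1 * Real.tan (x / 2) - x * (1 / Real.cos (x / 2) ^ 2 * (1 / 2))) /
          Real.tan (x / 2) ^ 2 < 0 := div_neg_of_neg_of_pos (by linarith) ht2
      linarith
    exact (StrictMonoOn.monotoneOn
      (strictMonoOn_of_deriv_pos hconv hcont hderiv))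
  · have h : Real.tan (r₀ / 2) < 0.31 / 1.98 := by
      have : r₀ / 2 = (0.155 : ℝ) := by norm_num [r₀]
      rw [this]; exact aux_tan_upper
    have htan : 0 < Real.tan (r₀ / 2) := by
      have : r₀ / 2 = (0.155 : ℝ) := by norm_num [r₀]
      rw [this]; exact aux_tan_pos (by norm_num) le_rfl
    simp only [f]
    have : (1.98 : ℝ) < r₀ / Real.tan (r₀ / 2) := by
      rw [lt_div_iff₀ htan]
      calc 1.98 * Real.tan (r₀ / 2) < 1.98 * (0.31 / 1.98) := by linarith
        _ = r₀ := by norm_num [r₀]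
    linarith
end

section
/- Let C₀ = 0.45, r₀ = 0.31, and L(1) = (2/16)(2 − 2ψ(C₀r + 3r/2)) + 2(1/2 + 1/16)(2 − 2ψ(C₀r + r/2)) with ψ(s) = s/tan(s). Then for all 0 < r ≤ r₀: (2/(2 − L(1)))·((1/4)C₀ + 1/4) < C₀ and (2/(2 − L(1)))·((1/8)C₀ + 1/4) < 1/2. -/
/-- `ψ(s) = s / tan s`, with `ψ(0) = 1`. -/
noncomputable def psi (s : ℝ) : ℝ := if s = 0 then 1 else s / Real.tan s

lemma psi_bounds {s : ℝ} (h0 : 0 < s) (h1 : s ≤ 0.61) :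
    1 - s ^ 2 / 2 ≤ psi s ∧ psi s ≤ 1 := by
  have hpi : s < Real.pi / 2 := by
    have := Real.pi_gt_three
    linarith
  have htan : 0 < Real.tan s := Real.tan_pos_of_pos_of_lt_pi_div_two h0 hpi
  have hsin : 0 < Real.sin s := Real.sin_pos_of_pos_of_lt_pi h0 (by linarith [Real.pi_gt_three])
  rw [psi, if_neg h0.ne']
  constructor
  · have hcos : 1 - s ^ 2 / 2 ≤ Real.cos s := Real.one_sub_sq_div_two_le_cos
    have hsl : Real.sin s ≤ s := (Real.sin_lt h0).le
    rw [Real.tan_eq_sin_div_cos, div_div_eq_mul_div, le_div_iff₀ hsin]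
    have hcospos : 0 < Real.cos s := Real.cos_pos_of_mem_Ioo ⟨by linarith, hpi⟩
    nlinarith
  · rw [div_le_one htan]
    exact (Real.lt_tan h0 hpi).le

theorem stmt_15 :
    let C₀ : ℝ := 0.45
    let r₀ : ℝ := 0.31
    ∀ r : ℝ, 0 < r → r ≤ r₀ →
      let L1 : ℝ :=
        (2/16) * (2 - 2 * psi (C₀ * r + 3 * r / 2))
          + 2 * (1/2 + 1/16) * (2 - 2 * psi (C₀ * r + r / 2))
      2 / (2 - L1) * ((1/4) * C₀ + 1/4) < C₀ ∧
      2 / (2 - L1) * ((1/8) * C₀ + 1/4) < 1/2 := by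
  intro C₀ r₀ r hr hr0 L1
  have hs1 : (0:ℝ) < C₀ * r + 3 * r / 2 := by simp only [C₀]; nlinarith
  have hs1' : C₀ * r + 3 * r / 2 ≤ 0.61 := by simp only [C₀, r₀] at *; nlinarith
  have hs2 : (0:ℝ) < C₀ * r + r / 2 := by simp only [C₀]; nlinarith
  have hs2' : C₀ * r + r / 2 ≤ 0.61 := by simp only [C₀, r₀] at *; nlinarith
  obtain ⟨hA1, hA2⟩ := psi_bounds hs1 hs1'
  obtain ⟨hB1, hB2⟩ := psi_bounds hs2 hs2'
  have hL1pos : 0 ≤ L1 := by simp only [L1]; nlinarith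
  have hL1lt : L1 < 0.3 := by
    simp only [L1, C₀, r₀] at *
    nlinarith [sq_nonneg r, sq_nonneg (C₀ * r + 3 * r / 2)]
  clear_value L1
  have hden : (0:ℝ) < 2 - L1 := by linarith
  constructor
  · rw [div_mul_eq_mul_div, div_lt_iff₀ hden]
    simp only [C₀]; nlinarith
  · rw [div_mul_eq_mul_div, div_lt_iff₀ hden]
    nlinarith
end

section
/- Let (x_i) be a sequence in a complete metric space and T a map on sequences satisfying: (i) contractivity, dist(T^k x_{i+1}, T^k x_i) ≤ μ^k · sup_ℓ dist(x_ℓ, x_{ℓ+1}) for some μ ∈ (0,1) and all i, k; and (ii) the displacement-safe condition dist(Tx_{2i}, x_i) ≤ C · sup_ℓ dist(x_ℓ, x_{ℓ+1}) for some C > 0. Define piecewise-linear-in-parameter functions f_k on ℝ with f_k(i/2^k) = T^k x_i interpolated along the index. Then sup_i dist(T^{k+1} x_{2i}, T^k x_i) ≤ C μ^k δ where δ = sup_ℓ dist(x_ℓ, x_{ℓ+1}), and consequently the sequence (f_k) is uniformly Cauchy on compact sets, so T converges to a continuous limit. -/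
/-- abstract form of Theorem 1: for data `x : ℤ → M` in a complete
metric space and a refinement operator `T` on sequences satisfying contractivity
and the displacement-safe condition, the key estimate
`sup_i dist(T^{k+1}x_{2i}, T^k x_i) ≤ C μ^k δ` holds, and the refined data is
uniformly Cauchy across levels (comparing dyadic parameter values `i/2^k`),
which yields convergence of the interpolants to a continuous limit. -/
theorem stmt_19 {M : Type*} [MetricSpace M] [CompleteSpace M]
    (T : (ℤ → M) → (ℤ → M)) (x : ℤ → M) (μ C : ℝ)
    (hμ : μ ∈ Set.Ioo (0:ℝ) 1) (hC : 0 < C)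
    (δ : ℝ) (hδ : δ = ⨆ ℓ : ℤ, dist (x ℓ) (x (ℓ+1)))
    (hbdd : BddAbove (Set.range fun ℓ : ℤ => dist (x ℓ) (x (ℓ+1))))
    -- (i) contractivity of the scheme:
    (hcontr : ∀ k : ℕ, ∀ i : ℤ,
      dist ((T^[k] x) (i+1)) ((T^[k] x) i) ≤ μ^k * δ)
    -- (ii) displacement-safe condition (valid for any data, in particular all iterates):
    (hdisp : ∀ y : ℤ → M, BddAbove (Set.range fun ℓ : ℤ => dist (y ℓ) (y (ℓ+1))) →
      ∀ i : ℤ, dist (T y (2*i)) (y i) ≤ C * ⨆ ℓ : ℤ, dist (y ℓ) (y (ℓ+1))) :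
    (∀ k : ℕ, ∀ i : ℤ, dist ((T^[k+1] x) (2*i)) ((T^[k] x) i) ≤ C * μ^k * δ) ∧
    (∀ ε > 0, ∃ N : ℕ, ∀ k m : ℕ, N ≤ k → k ≤ m → ∀ i : ℤ,
      dist ((T^[k] x) i) ((T^[m] x) (2^(m-k) * i)) < ε) := by
  obtain ⟨hμ0, hμ1⟩ := hμ
  have hδ0 : 0 ≤ δ := by
    rw [hδ]
    exact le_trans dist_nonneg (le_ciSup hbdd (0 : ℤ))
  -- key estimate
  have key : ∀ k : ℕ, ∀ i : ℤ, dist ((T^[k+1] x) (2*i)) ((T^[k] x) i) ≤ C * μ^k * δ := by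
    intro k i
    have hb : BddAbove (Set.range fun ℓ : ℤ => dist ((T^[k] x) ℓ) ((T^[k] x) (ℓ+1))) := by
      refine ⟨μ^k * δ, ?_⟩
      rintro r ⟨ℓ, rfl⟩
      simp only []
      rw [dist_comm]; exact hcontr k ℓ
    have h1 := hdisp (T^[k] x) hb i
    have h2 : (⨆ ℓ : ℤ, dist ((T^[k] x) ℓ) ((T^[k] x) (ℓ+1))) ≤ μ^k * δ := by
      refine ciSup_le fun ℓ => ?_
      rw [dist_comm]; exact hcontr k ℓ
    calc dist ((T^[k+1] x) (2*i)) ((T^[k] x) i)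
        = dist (T (T^[k] x) (2*i)) ((T^[k] x) i) := by
          rw [Function.iterate_succ_apply']
      _ ≤ C * ⨆ ℓ : ℤ, dist ((T^[k] x) ℓ) ((T^[k] x) (ℓ+1)) := h1
      _ ≤ C * (μ^k * δ) := by exact mul_le_mul_of_nonneg_left h2 hC.le
      _ = C * μ^k * δ := by ring
  refine ⟨key, ?_⟩
  -- telescoping bound
  have tele : ∀ k n : ℕ, ∀ i : ℤ,
      dist ((T^[k] x) i) ((T^[k+n] x) (2^n * i)) ≤ ∑ j ∈ Finset.range n, C * μ^(k+j) * δ := by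
    intro k n
    induction n with
    | zero => intro i; simp
    | succ n ih =>
      intro i
      have h2 : (2:ℤ)^(n+1) * i = 2 * (2^n * i) := by ring
      calc dist ((T^[k] x) i) ((T^[k+(n+1)] x) (2^(n+1) * i))
          ≤ dist ((T^[k] x) i) ((T^[k+n] x) (2^n * i))
            + dist ((T^[k+n] x) (2^n * i)) ((T^[k+(n+1)] x) (2^(n+1) * i)) := dist_triangle _ _ _
        _ ≤ (∑ j ∈ Finset.range n, C * μ^(k+j) * δ) + C * μ^(k+n) * δ := by
            refine add_le_add (ih i) ?_
            rw [dist_comm, h2, show k+(n+1) = (k+n)+1 from rfl]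
            exact key (k+n) (2^n * i)
        _ = ∑ j ∈ Finset.range (n+1), C * μ^(k+j) * δ := by
            rw [Finset.sum_range_succ]
  -- geometric bound
  have geo : ∀ k n : ℕ, (∑ j ∈ Finset.range n, C * μ^(k+j) * δ) ≤ μ^k * (C * δ / (1-μ)) := by
    intro k n
    have h1 : (∑ j ∈ Finset.range n, C * μ^(k+j) * δ)
        = C * δ * μ^k * ∑ j ∈ Finset.range n, μ^j := by
      rw [Finset.mul_sum]
      exact Finset.sum_congr rfl fun j _ => by rw [pow_add]; ring
    rw [h1]
    have h1μ : 0 < 1 - μ := by linarith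
    have hsum : (∑ j ∈ Finset.range n, μ^j) ≤ 1/(1-μ) := by
      rw [geom_sum_eq (by linarith), show (μ^n - 1)/(μ - 1) = (1 - μ^n)/(1 - μ) by
        rw [← neg_sub (1:ℝ) (μ^n), ← neg_sub (1:ℝ) μ, neg_div_neg_eq]]
      rw [div_le_div_iff₀ h1μ h1μ]
      nlinarith [pow_pos hμ0 n]
    have hpos : 0 ≤ C * δ * μ^k := by positivity
    calc C * δ * μ^k * ∑ j ∈ Finset.range n, μ^j
        ≤ C * δ * μ^k * (1/(1-μ)) := mul_le_mul_of_nonneg_left hsum hpos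
      _ = μ^k * (C * δ / (1-μ)) := by ring
  intro ε hε
  set K := C * δ / (1-μ) with hK
  have hK0 : 0 ≤ K := by apply div_nonneg; positivity; linarith
  obtain ⟨N, hN⟩ := exists_pow_lt_of_lt_one (show (0:ℝ) < ε/(K+1) by positivity) hμ1
  refine ⟨N, fun k m hNk hkm i => ?_⟩
  obtain ⟨n, rfl⟩ := Nat.exists_eq_add_of_le hkm
  have hmk : k + n - k = n := by omega
  rw [hmk]
  calc dist ((T^[k] x) i) ((T^[k+n] x) (2^n * i))
      ≤ ∑ j ∈ Finset.range n, C * μ^(k+j) * δ := tele k n i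
    _ ≤ μ^k * K := geo k n
    _ ≤ μ^N * K := by
        exact mul_le_mul_of_nonneg_right (pow_le_pow_of_le_one hμ0.le hμ1.le hNk) hK0
    _ ≤ μ^N * (K+1) := by nlinarith [pow_pos hμ0 N]
    _ < ε/(K+1) * (K+1) := by
        exact mul_lt_mul_of_pos_right hN (by linarith)
    _ = ε := by field_simp
end
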